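/- Let N ≥ 1 and let λ = (λ_1, …, λ_m) be a partition with all parts positive. Then the differential operator representing Tr(a†²a²), namely D₂₂ : f ↦ Σ_{i,j,k,l=1}^N x_{ij} x_{jk} ∂²f/(∂x_{lk} ∂x_{il}), acts on the multi-trace polynomial p_λ by D₂₂ p_λ = Σ_{j : λ_j ≥ 2} λ_j Σ_{s=0}^{λ_j−2} p_{λ_j−s} · p_s · p_{λ ∖ λ_j} + 2 Σ_{1 ≤ j < l ≤ m} λ_j λ_l · p_{λ_j+λ_l} · p_{λ ∖ {λ_j, λ_l}}, where λ ∖ λ_j means λ with the part λ_j deleted, and the factor p_0 = N appears in the s = 0 terms. -/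

import Mathlib

open MvPolynomial

/-- The matrix of indeterminates `X`, with entries `x_{ij}` in the polynomial ring
`ℝ[x_{ij} : 1 ≤ i,j ≤ N]`. -/
noncomputable def Xmat (N : ℕ) : Matrix (Fin N) (Fin N) (MvPolynomial (Fin N × Fin N) ℝ) :=
  fun i j => MvPolynomial.X (i, j)

/-- The trace power `p_k = Tr(X^k)`; in particular `p_0 = N`. -/
noncomputable def trPow (N : ℕ) (k : ℕ) : MvPolynomial (Fin N × Fin N) ℝ :=
  Matrix.trace (Xmat N ^ k)

/-- The multi-trace polynomial `p_λ = p_{λ_1} ⋯ p_{λ_m}` attached to a partition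
`λ = (λ_1, …, λ_m)` (given as a list of parts). -/
noncomputable def multiTrace (N : ℕ) (lam : List ℕ) : MvPolynomial (Fin N × Fin N) ℝ :=
  (lam.map (trPow N)).prod

/-- The differential operator representing `Tr(a†² a²)`:
`D₂₂ f = Σ_{i,j,k,l} x_{ij} x_{jk} ∂²f/(∂x_{lk} ∂x_{il})`. -/
noncomputable def D22 (N : ℕ) (f : MvPolynomial (Fin N × Fin N) ℝ) :
    MvPolynomial (Fin N × Fin N) ℝ :=
  ∑ i : Fin N, ∑ j : Fin N, ∑ k : Fin N, ∑ l : Fin N,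
    MvPolynomial.X (i, j) * MvPolynomial.X (j, k) * pderiv (l, k) (pderiv (i, l) f)

lemma pderiv_pow_entry (N : ℕ) (c d a b : Fin N) (m : ℕ) :
    pderiv (c,d) ((Xmat N ^ m) a b) =
      ∑ r ∈ Finset.range m, (Xmat N ^ r) a c * (Xmat N ^ (m-1-r)) d b := by
  induction m generalizing a b with
  | zero =>
      simp [Matrix.one_apply]
      split <;> simp
  | succ m ih =>
      rw [pow_succ, Matrix.mul_apply, map_sum]
      have step : ∀ e : Fin N, pderiv (c,d) ((Xmat N ^ m) a e * Xmat N e b) =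
          (∑ r ∈ Finset.range m, (Xmat N ^ r) a c * (Xmat N ^ (m-1-r)) d e) * Xmat N e b
          + (Xmat N ^ m) a e * (if (e, b) = (c, d) then 1 else 0) := by
        intro e
        rw [pderiv_mul, ih]
        congr 1
        simp [Xmat, Pi.single_apply]
      simp only [step]
      rw [Finset.sum_add_distrib, Finset.sum_range_succ]
      congr 1
      · simp only [Finset.sum_mul]
        rw [Finset.sum_comm]
        refine Finset.sum_congr rfl fun r hr => ?_
        rw [Finset.sum_congr rfl (fun e _ => mul_assoc _ _ _), ← Finset.mul_sum,
          ← Matrix.mul_apply, ← pow_succ]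
        have hr' : r < m := Finset.mem_range.mp hr
        have : m - 1 - r + 1 = m + 1 - 1 - r := by omega
        rw [this]
      · simp only [Prod.mk.injEq, ite_and, mul_ite, mul_one, mul_zero]
        rw [Finset.sum_ite_eq' Finset.univ c]
        have h0 : (m + 1 - 1 - m) = 0 := by omega
        rw [h0, pow_zero]
        by_cases h : b = d
        · simp [h, Matrix.one_apply]
        · have h' : d ≠ b := fun hh => h hh.symm
          simp [h, h', Matrix.one_apply]

lemma pderiv_trPow (N : ℕ) (c d : Fin N) (k : ℕ) :
    pderiv (c,d) (trPow N k) = (k : MvPolynomial (Fin N × Fin N) ℝ) * (Xmat N ^ (k-1)) d c := by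
  rw [trPow, Matrix.trace]
  simp only [Matrix.diag]
  rw [map_sum]
  simp only [pderiv_pow_entry]
  rw [Finset.sum_comm]
  have : ∀ r ∈ Finset.range k,
      ∑ a : Fin N, (Xmat N ^ r) a c * (Xmat N ^ (k-1-r)) d a
        = (Xmat N ^ (k-1)) d c := by
    intro r hr
    rw [Finset.sum_congr rfl (fun a _ => mul_comm _ _), ← Matrix.mul_apply, ← pow_add]
    have := Finset.mem_range.mp hr
    have h2 : k - 1 - r + r = k - 1 := by omega
    rw [h2]
  rw [Finset.sum_congr rfl this, Finset.sum_const, Finset.card_range, nsmul_eq_mul]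

noncomputable def crossD (N : ℕ) (f g : MvPolynomial (Fin N × Fin N) ℝ) :
    MvPolynomial (Fin N × Fin N) ℝ :=
  ∑ i : Fin N, ∑ j : Fin N, ∑ k : Fin N, ∑ l : Fin N,
    MvPolynomial.X (i, j) * MvPolynomial.X (j, k) * (pderiv (i, l) f * pderiv (l, k) g)

lemma D22_mul (N : ℕ) (f g : MvPolynomial (Fin N × Fin N) ℝ) :
    D22 N (f * g) = D22 N f * g + f * D22 N g + crossD N f g + crossD N g f := by
  have h : ∀ i j k l : Fin N,
      MvPolynomial.X (i, j) * MvPolynomial.X (j, k) * pderiv (l, k) (pderiv (i, l) (f * g))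
      = MvPolynomial.X (i, j) * MvPolynomial.X (j, k) * pderiv (l, k) (pderiv (i, l) f) * g
        + f * (MvPolynomial.X (i, j) * MvPolynomial.X (j, k) * pderiv (l, k) (pderiv (i, l) g))
        + MvPolynomial.X (i, j) * MvPolynomial.X (j, k) * (pderiv (i, l) f * pderiv (l, k) g)
        + MvPolynomial.X (i, j) * MvPolynomial.X (j, k) * (pderiv (i, l) g * pderiv (l, k) f) := by
    intro i j k l
    rw [pderiv_mul, map_add, pderiv_mul, pderiv_mul]
    ring
  simp only [D22, crossD, h, Finset.sum_add_distrib, ← Finset.sum_mul, ← Finset.mul_sum]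

lemma crossD_mul_right (N : ℕ) (f g h : MvPolynomial (Fin N × Fin N) ℝ) :
    crossD N f (g * h) = crossD N f g * h + crossD N f h * g := by
  have key : ∀ i j k l : Fin N,
      MvPolynomial.X (i, j) * MvPolynomial.X (j, k) * (pderiv (i, l) f * pderiv (l, k) (g * h))
      = MvPolynomial.X (i, j) * MvPolynomial.X (j, k) * (pderiv (i, l) f * pderiv (l, k) g) * h
        + MvPolynomial.X (i, j) * MvPolynomial.X (j, k) * (pderiv (i, l) f * pderiv (l, k) h) * g := by
    intro i j k l
    rw [pderiv_mul]
    ring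
  simp only [crossD, key, Finset.sum_add_distrib, ← Finset.sum_mul]

lemma crossD_mul_left (N : ℕ) (f g h : MvPolynomial (Fin N × Fin N) ℝ) :
    crossD N (f * g) h = crossD N f h * g + crossD N g h * f := by
  have key : ∀ i j k l : Fin N,
      MvPolynomial.X (i, j) * MvPolynomial.X (j, k) * (pderiv (i, l) (f * g) * pderiv (l, k) h)
      = MvPolynomial.X (i, j) * MvPolynomial.X (j, k) * (pderiv (i, l) f * pderiv (l, k) h) * g
        + MvPolynomial.X (i, j) * MvPolynomial.X (j, k) * (pderiv (i, l) g * pderiv (l, k) h) * f := by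
    intro i j k l
    rw [pderiv_mul]
    ring
  simp only [crossD, key, Finset.sum_add_distrib, ← Finset.sum_mul]

lemma crossD_one_right (N : ℕ) (f : MvPolynomial (Fin N × Fin N) ℝ) :
    crossD N f 1 = 0 := by
  simp [crossD, pderiv_one]

lemma crossD_one_left (N : ℕ) (f : MvPolynomial (Fin N × Fin N) ℝ) :
    crossD N 1 f = 0 := by
  simp [crossD, pderiv_one]

lemma trace_XXpow (N : ℕ) (m : ℕ) :
    ∑ i : Fin N, ∑ j : Fin N, ∑ k : Fin N,
      Xmat N i j * Xmat N j k * (Xmat N ^ m) k i = trPow N (m + 2) := by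
  have hm : m + 2 = 1 + (1 + m) := by omega
  rw [trPow, hm, pow_add, pow_add, pow_one, Matrix.trace]
  simp only [Matrix.diag, Matrix.mul_apply, Finset.mul_sum, Finset.sum_mul]
  refine Finset.sum_congr rfl fun i _ => Finset.sum_congr rfl fun j _ =>
    Finset.sum_congr rfl fun k _ => by ring

lemma crossD_trPow (N : ℕ) (a b : ℕ) (ha : 1 ≤ a) (hb : 1 ≤ b) :
    crossD N (trPow N a) (trPow N b)
      = ((a * b : ℕ) : MvPolynomial (Fin N × Fin N) ℝ) * trPow N (a + b) := by
  simp only [crossD, pderiv_trPow]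
  have h1 : ∀ i j k : Fin N,
      (∑ l : Fin N, MvPolynomial.X (i, j) * MvPolynomial.X (j, k) *
        (((a : MvPolynomial (Fin N × Fin N) ℝ) * (Xmat N ^ (a-1)) l i) *
         ((b : MvPolynomial (Fin N × Fin N) ℝ) * (Xmat N ^ (b-1)) k l)))
      = ((a * b : ℕ) : MvPolynomial (Fin N × Fin N) ℝ) *
          (Xmat N i j * Xmat N j k * (Xmat N ^ ((b-1) + (a-1))) k i) := by
    intro i j k
    rw [Finset.sum_congr rfl (fun l _ => show
        MvPolynomial.X (i, j) * MvPolynomial.X (j, k) *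
          (((a : MvPolynomial (Fin N × Fin N) ℝ) * (Xmat N ^ (a-1)) l i) *
           ((b : MvPolynomial (Fin N × Fin N) ℝ) * (Xmat N ^ (b-1)) k l))
        = ((a * b : ℕ) : MvPolynomial (Fin N × Fin N) ℝ) *
            (Xmat N i j * Xmat N j k * ((Xmat N ^ (b-1)) k l * (Xmat N ^ (a-1)) l i))
        from by push_cast; show _ = _; unfold Xmat; ring)]
    rw [← Finset.mul_sum, ← Finset.mul_sum, ← Matrix.mul_apply, ← pow_add]
  simp only [h1, ← Finset.mul_sum]
  rw [trace_XXpow]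
  have he : (b-1) + (a-1) + 2 = a + b := by omega
  rw [he]

lemma trPow_eq_sum (N : ℕ) (k : ℕ) : trPow N k = ∑ l : Fin N, (Xmat N ^ k) l l := by
  rw [trPow, Matrix.trace]; rfl

lemma D22_trPow (N : ℕ) (n : ℕ) :
    D22 N (trPow N n) = (n : MvPolynomial (Fin N × Fin N) ℝ) *
      ∑ s ∈ Finset.range (n - 1), trPow N (n - s) * trPow N s := by
  have hd : ∀ i k l : Fin N, pderiv (l, k) (pderiv (i, l) (trPow N n))
      = (n : MvPolynomial (Fin N × Fin N) ℝ) *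
          ∑ r ∈ Finset.range (n-1), (Xmat N ^ r) l l * (Xmat N ^ (n-1-1-r)) k i := by
    intro i k l
    rw [pderiv_trPow]
    have : (n : MvPolynomial (Fin N × Fin N) ℝ) * (Xmat N ^ (n-1)) l i
        = (n : ℕ) • ((Xmat N ^ (n-1)) l i) := by rw [nsmul_eq_mul]
    rw [this, map_nsmul, pderiv_pow_entry, nsmul_eq_mul]
  have h1 : ∀ i j k : Fin N,
      (∑ l : Fin N, MvPolynomial.X ((i, j) : Fin N × Fin N) * MvPolynomial.X (j, k) *
        pderiv (l, k) (pderiv (i, l) (trPow N n)))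
      = (n : MvPolynomial (Fin N × Fin N) ℝ) * ∑ r ∈ Finset.range (n-1),
          trPow N r * (Xmat N i j * Xmat N j k * (Xmat N ^ (n-1-1-r)) k i) := by
    intro i j k
    simp only [hd, Finset.mul_sum]
    rw [Finset.sum_comm]
    refine Finset.sum_congr rfl fun r _ => ?_
    rw [trPow_eq_sum, Finset.sum_mul, Finset.mul_sum]
    refine Finset.sum_congr rfl fun l _ => ?_
    show (MvPolynomial.X (i, j) : MvPolynomial (Fin N × Fin N) ℝ) * MvPolynomial.X (j, k) *
        ((n : MvPolynomial (Fin N × Fin N) ℝ) * ((Xmat N ^ r) l l * (Xmat N ^ (n-1-1-r)) k i)) = _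
    unfold Xmat
    ring
  simp only [D22, h1, ← Finset.mul_sum]
  congr 1
  have h2 : (∑ i : Fin N, ∑ j : Fin N, ∑ k : Fin N, ∑ r ∈ Finset.range (n-1),
      trPow N r * (Xmat N i j * Xmat N j k * (Xmat N ^ (n-1-1-r)) k i))
      = ∑ r ∈ Finset.range (n-1), ∑ i : Fin N, ∑ j : Fin N, ∑ k : Fin N,
          trPow N r * (Xmat N i j * Xmat N j k * (Xmat N ^ (n-1-1-r)) k i) := by
    rw [Finset.sum_congr rfl (fun i _ => Finset.sum_congr rfl fun j _ => Finset.sum_comm),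
      Finset.sum_congr rfl (fun i _ => Finset.sum_comm), Finset.sum_comm]
  rw [h2]
  refine Finset.sum_congr rfl fun r hr => ?_
  simp only [← Finset.mul_sum]
  rw [trace_XXpow]
  have : n - 1 - 1 - r + 2 = n - r := by
    have := Finset.mem_range.mp hr; omega
  rw [this, mul_comm]

lemma multiTrace_nil (N : ℕ) : multiTrace N ([] : List ℕ) = 1 := by simp [multiTrace]

lemma multiTrace_cons (N : ℕ) (n : ℕ) (mu : List ℕ) :
    multiTrace N (n :: mu) = trPow N n * multiTrace N mu := by simp [multiTrace]

lemma crossD_trPow_multiTrace (N : ℕ) (n : ℕ) (hn : 1 ≤ n) (mu : List ℕ)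
    (hpos : ∀ p ∈ mu, 0 < p) :
    crossD N (trPow N n) (multiTrace N mu)
      = ∑ t : Fin mu.length, ((n * mu.get t : ℕ) : MvPolynomial (Fin N × Fin N) ℝ) *
          (trPow N (n + mu.get t) * multiTrace N (mu.eraseIdx t)) := by
  induction mu with
  | nil => simp [multiTrace_nil, crossD_one_right]
  | cons m mu ih =>
      rw [multiTrace_cons, crossD_mul_right, crossD_trPow N n m hn (hpos m (by simp)),
        ih (fun p hp => hpos p (by simp [hp]))]
      simp only [List.length_cons]
      rw [Fin.sum_univ_succ]
      congr 1
      · simp [mul_assoc]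
      · rw [Finset.sum_mul]
        refine Finset.sum_congr rfl fun t _ => ?_
        have h1 : (m :: mu).get t.succ = mu.get t := rfl
        simp only [Fin.val_succ, List.eraseIdx_cons_succ, multiTrace_cons, h1]
        push_cast
        ring

lemma crossD_multiTrace_trPow (N : ℕ) (n : ℕ) (hn : 1 ≤ n) (mu : List ℕ)
    (hpos : ∀ p ∈ mu, 0 < p) :
    crossD N (multiTrace N mu) (trPow N n)
      = ∑ t : Fin mu.length, ((n * mu.get t : ℕ) : MvPolynomial (Fin N × Fin N) ℝ) *
          (trPow N (n + mu.get t) * multiTrace N (mu.eraseIdx t)) := by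
  induction mu with
  | nil => simp [multiTrace_nil, crossD_one_left]
  | cons m mu ih =>
      rw [multiTrace_cons, crossD_mul_left, crossD_trPow N m n (hpos m (by simp)) hn,
        ih (fun p hp => hpos p (by simp [hp]))]
      simp only [List.length_cons]
      rw [Fin.sum_univ_succ]
      congr 1
      · rw [show m * n = n * m from by ring, show m + n = n + m from by ring]
        simp [mul_assoc]
      · rw [Finset.sum_mul]
        refine Finset.sum_congr rfl fun t _ => ?_
        have h1 : (m :: mu).get t.succ = mu.get t := rfl
        simp only [Fin.val_succ, List.eraseIdx_cons_succ, multiTrace_cons, h1]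
        push_cast
        ring

/-- Theorem 1(ii) of the paper (unnormalized form): for a partition `λ` with all parts
positive,
`D₂₂ p_λ = Σ_{j : λ_j ≥ 2} λ_j Σ_{s=0}^{λ_j−2} p_{λ_j−s} p_s p_{λ∖λ_j}
  + 2 Σ_{j<l} λ_j λ_l p_{λ_j+λ_l} p_{λ∖{λ_j,λ_l}}`,
where `λ ∖ λ_j` deletes the part `λ_j` (for a part `λ_j = 1` the inner sum over
`s` is empty, so the first sum effectively runs over the parts `λ_j ≥ 2`), and the
factor `p_0 = N` appears in the `s = 0` terms. -/
theorem trace_adag2_a2_on_multiTrace (N : ℕ) (hN : 1 ≤ N) (lam : List ℕ)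
    (hsort : lam.Pairwise (· ≥ ·)) (hpos : ∀ p ∈ lam, 0 < p) :
    D22 N (multiTrace N lam) =
      (∑ j : Fin lam.length,
        (lam.get j : MvPolynomial (Fin N × Fin N) ℝ) *
          ∑ s ∈ Finset.range (lam.get j - 1),
            trPow N (lam.get j - s) * trPow N s * multiTrace N (lam.eraseIdx j))
      + 2 * ∑ j : Fin lam.length, ∑ l : Fin lam.length,
          if (j : ℕ) < (l : ℕ) then
            (lam.get j : MvPolynomial (Fin N × Fin N) ℝ) * (lam.get l) *
              trPow N (lam.get j + lam.get l) *
              multiTrace N ((lam.eraseIdx l).eraseIdx j)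
          else 0 := by
  clear hsort
  induction lam with
  | nil => simp [multiTrace_nil, D22, pderiv_one]
  | cons n mu ih =>
      have hn : 1 ≤ n := hpos n (by simp)
      have hpos' : ∀ p ∈ mu, 0 < p := fun p hp => hpos p (by simp [hp])
      have hA : (∑ j : Fin (n :: mu).length,
            ((n :: mu).get j : MvPolynomial (Fin N × Fin N) ℝ) *
              ∑ s ∈ Finset.range ((n :: mu).get j - 1),
                trPow N ((n :: mu).get j - s) * trPow N s *
                  multiTrace N ((n :: mu).eraseIdx j))
          = ((n : MvPolynomial (Fin N × Fin N) ℝ) *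
              ∑ s ∈ Finset.range (n - 1), trPow N (n - s) * trPow N s) * multiTrace N mu
            + trPow N n * ∑ j : Fin mu.length,
                (mu.get j : MvPolynomial (Fin N × Fin N) ℝ) *
                  ∑ s ∈ Finset.range (mu.get j - 1),
                    trPow N (mu.get j - s) * trPow N s * multiTrace N (mu.eraseIdx j) := by
        simp only [List.length_cons]
        rw [Fin.sum_univ_succ]
        congr 1
        · have h0 : (n :: mu).get (0 : Fin (mu.length + 1)) = n := rfl
          have h0' : (n :: mu).eraseIdx ((0 : Fin (mu.length + 1)) : ℕ) = mu := rfl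
          rw [h0, h0', mul_assoc, Finset.sum_mul]
        · rw [Finset.mul_sum]
          refine Finset.sum_congr rfl fun j _ => ?_
          have h1 : (n :: mu).get j.succ = mu.get j := rfl
          have h2 : (n :: mu).eraseIdx ((j.succ : Fin (mu.length + 1)) : ℕ)
              = n :: mu.eraseIdx j := by
            simp [Fin.val_succ]
          rw [h1, h2]
          simp only [multiTrace_cons]
          rw [Finset.mul_sum, Finset.mul_sum, Finset.mul_sum]
          exact Finset.sum_congr rfl fun s _ => by ring
      have hB : (∑ j : Fin (n :: mu).length, ∑ l : Fin (n :: mu).length,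
            if (j : ℕ) < (l : ℕ) then
              ((n :: mu).get j : MvPolynomial (Fin N × Fin N) ℝ) * ((n :: mu).get l) *
                trPow N ((n :: mu).get j + (n :: mu).get l) *
                multiTrace N (((n :: mu).eraseIdx l).eraseIdx j)
            else 0)
          = (∑ t : Fin mu.length, ((n * mu.get t : ℕ) : MvPolynomial (Fin N × Fin N) ℝ) *
              (trPow N (n + mu.get t) * multiTrace N (mu.eraseIdx t)))
            + trPow N n * ∑ j : Fin mu.length, ∑ l : Fin mu.length,
                if (j : ℕ) < (l : ℕ) then
                  (mu.get j : MvPolynomial (Fin N × Fin N) ℝ) * (mu.get l) *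
                    trPow N (mu.get j + mu.get l) *
                    multiTrace N ((mu.eraseIdx l).eraseIdx j)
                else 0 := by
        simp only [List.length_cons]
        rw [Fin.sum_univ_succ]
        congr 1
        · rw [Fin.sum_univ_succ]
          have hz : ¬ (((0 : Fin (mu.length + 1)) : ℕ) < ((0 : Fin (mu.length + 1)) : ℕ)) := by simp
          rw [if_neg hz, zero_add]
          refine Finset.sum_congr rfl fun l _ => ?_
          have hc : ((0 : Fin (mu.length + 1)) : ℕ) < ((l.succ : Fin (mu.length + 1)) : ℕ) := by
            simp [Fin.val_succ]
          rw [if_pos hc]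
          have h0 : (n :: mu).get (0 : Fin (mu.length + 1)) = n := rfl
          have h1 : (n :: mu).get l.succ = mu.get l := rfl
          have h2 : (((n :: mu).eraseIdx ((l.succ : Fin (mu.length + 1)) : ℕ)).eraseIdx
              ((0 : Fin (mu.length + 1)) : ℕ)) = mu.eraseIdx l := by
            simp [Fin.val_succ]
          rw [h0, h1, h2]
          push_cast
          ring
        · rw [Finset.mul_sum]
          refine Finset.sum_congr rfl fun j _ => ?_
          rw [Fin.sum_univ_succ]
          have hz : ¬ (((j.succ : Fin (mu.length + 1)) : ℕ) < ((0 : Fin (mu.length + 1)) : ℕ)) := by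
            simp
          rw [if_neg hz, zero_add, Finset.mul_sum]
          refine Finset.sum_congr rfl fun l _ => ?_
          have hcond : (((j.succ : Fin (mu.length + 1)) : ℕ) < ((l.succ : Fin (mu.length + 1)) : ℕ))
              ↔ ((j : ℕ) < (l : ℕ)) := by
            simp [Fin.val_succ, Nat.succ_lt_succ_iff]
          have h1 : (n :: mu).get j.succ = mu.get j := rfl
          have h1' : (n :: mu).get l.succ = mu.get l := rfl
          have h2 : (((n :: mu).eraseIdx ((l.succ : Fin (mu.length + 1)) : ℕ)).eraseIdx
              ((j.succ : Fin (mu.length + 1)) : ℕ)) = n :: ((mu.eraseIdx l).eraseIdx j) := by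
            simp [Fin.val_succ]
          rw [h1, h1', h2, multiTrace_cons, mul_ite, mul_zero]
          by_cases h : (j : ℕ) < (l : ℕ)
          · rw [if_pos (hcond.mpr h), if_pos h]
            ring
          · rw [if_neg (fun hh => h (hcond.mp hh)), if_neg h]
      rw [multiTrace_cons, D22_mul, D22_trPow, ih hpos',
        crossD_trPow_multiTrace N n hn mu hpos', crossD_multiTrace_trPow N n hn mu hpos',
        hA, hB]
      ring
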